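/- Let A ∈ ℝ^{m×np}, let s^* = inf{‖z‖_{b1}/‖z‖_{b∞} : z ≠ 0, Az = 0}, and fix s with 1 < s < s^*. Define f_s(η) = sup{‖z‖_{b∞} : z ∈ ℝ^{np}, ‖Az‖₂ ≤ 1, ‖z‖_{b1} ≤ sη} for η ∈ [0,∞). Then f_s has a unique positive fixed point η^* (i.e., a unique η^* > 0 with f_s(η^*) = η^*), and η^* = 1/ω₂(A,s). -/

import Mathlib

open MeasureTheory ProbabilityTheory Finset Matrix

/-- Euclidean norm of a finitely-indexed real vector. -/
noncomputable def vnorm {ι : Type*} [Fintype ι] (v : ι → ℝ) : ℝ :=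
  Real.sqrt (∑ i, (v i) ^ 2)

/-- Euclidean norm of the `i`-th block of `x ∈ ℝ^{np}` (blocks indexed by `Fin p`). -/
noncomputable def bnorm {n p : ℕ} (x : Fin p × Fin n → ℝ) (i : Fin p) : ℝ :=
  vnorm (fun j => x (i, j))

/-- Block-ℓ1 norm: `‖x‖_{b1} = ∑ i, ‖x_i‖₂`. -/
noncomputable def bl1 {n p : ℕ} (x : Fin p × Fin n → ℝ) : ℝ :=
  ∑ i, bnorm x i

/-- Block-ℓ∞ norm: `‖x‖_{b∞} = max_i ‖x_i‖₂`. -/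
noncomputable def blinf {n p : ℕ} (x : Fin p × Fin n → ℝ) : ℝ :=
  ⨆ i, bnorm x i

open scoped Classical in
/-- Block support: indices of nonzero blocks. -/
noncomputable def bsupp {n p : ℕ} (x : Fin p × Fin n → ℝ) : Finset (Fin p) :=
  Finset.univ.filter (fun i => ∃ j, x (i, j) ≠ 0)

/-- `ω₂(A,s) = inf { ‖Az‖₂ / ‖z‖_{b∞} : z ≠ 0, ‖z‖_{b1} ≤ s ‖z‖_{b∞} }`. -/
noncomputable def omega2 {m n p : ℕ} (A : Matrix (Fin m) (Fin p × Fin n) ℝ) (s : ℝ) : ℝ :=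
  sInf {r | ∃ z : Fin p × Fin n → ℝ, z ≠ 0 ∧ bl1 z ≤ s * blinf z ∧
    r = vnorm (A.mulVec z) / blinf z}

/-- `ω_{b∞}(AᵀA,s) = inf { ‖AᵀAz‖_{b∞} / ‖z‖_{b∞} : z ≠ 0, ‖z‖_{b1} ≤ s ‖z‖_{b∞} }`. -/
noncomputable def omegaBInf {m n p : ℕ} (A : Matrix (Fin m) (Fin p × Fin n) ℝ) (s : ℝ) : ℝ :=
  sInf {r | ∃ z : Fin p × Fin n → ℝ, z ≠ 0 ∧ bl1 z ≤ s * blinf z ∧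
    r = blinf ((Aᵀ * A).mulVec z) / blinf z}

/-- Block ℓ1-constrained minimal singular value
`ρ_s(A) = inf { ‖Az‖₂ / ‖z‖₂ : z ≠ 0, ‖z‖_{b1}² ≤ s ‖z‖₂² }`. -/
noncomputable def rhoCMSV {m n p : ℕ} (A : Matrix (Fin m) (Fin p × Fin n) ℝ) (s : ℝ) : ℝ :=
  sInf {r | ∃ z : Fin p × Fin n → ℝ, z ≠ 0 ∧ (bl1 z) ^ 2 ≤ s * (vnorm z) ^ 2 ∧
    r = vnorm (A.mulVec z) / vnorm z}

/-- Spectral norm (largest singular value) of a real matrix, as the ℓ2→ℓ2 operator norm. -/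
noncomputable def specNorm {ι κ : Type*} [Fintype ι] [Fintype κ] (M : Matrix ι κ ℝ) : ℝ :=
  sSup {r | ∃ v : κ → ℝ, vnorm v ≤ 1 ∧ r = vnorm (M.mulVec v)}

/-- The `j`-th column block (of `n` columns) of a matrix with `np` columns. -/
def colBlock {ι : Type*} {n p : ℕ} (Q : Matrix ι (Fin p × Fin n) ℝ) (j : Fin p) :
    Matrix ι (Fin n) ℝ := Matrix.of fun r c => Q r (j, c)

/-- The `l`-th row block (of `n` rows) of a matrix with `np` rows. -/
def rowBlock {κ : Type*} {n p : ℕ} (P : Matrix (Fin p × Fin n) κ ℝ) (l : Fin p) :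
    Matrix (Fin n) κ ℝ := Matrix.of fun r c => P (l, r) c

/-- `δ_{ij} Iₙ`. -/
def deltaId (n : ℕ) {p : ℕ} (i j : Fin p) : Matrix (Fin n) (Fin n) ℝ :=
  if i = j then 1 else 0

/-- Orlicz ψ₂ norm of a scalar random variable. -/
noncomputable def psi2 {Ω : Type*} [MeasurableSpace Ω] (μ : Measure Ω) (Y : Ω → ℝ) : ℝ :=
  sInf {t | 0 < t ∧ ∫ ω, Real.exp ((Y ω) ^ 2 / t ^ 2) ∂μ ≤ 2}



set_option linter.unusedSectionVars false

section vnorm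
variable {ι : Type*} [Fintype ι]

lemma vnorm_nonneg (v : ι → ℝ) : 0 ≤ vnorm v := Real.sqrt_nonneg _

lemma vnorm_eq_norm (v : ι → ℝ) : vnorm v = ‖(WithLp.equiv 2 (ι → ℝ)).symm v‖ := by
  simp [vnorm, EuclideanSpace.norm_eq, sq_abs]

lemma vnorm_zero : vnorm (fun _ : ι => (0:ℝ)) = 0 := by
  simp [vnorm]

lemma vnorm_eq_zero {v : ι → ℝ} (h : vnorm v = 0) : v = 0 := by
  rw [vnorm_eq_norm, norm_eq_zero] at h
  have := congrArg (WithLp.equiv 2 (ι → ℝ)) h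
  simpa using this

lemma vnorm_add_le (a b : ι → ℝ) : vnorm (fun i => a i + b i) ≤ vnorm a + vnorm b := by
  have : (fun i => a i + b i) = a + b := rfl
  rw [this, vnorm_eq_norm, vnorm_eq_norm, vnorm_eq_norm]
  rw [show (WithLp.equiv 2 (ι → ℝ)).symm (a + b)
      = (WithLp.equiv 2 (ι → ℝ)).symm a + (WithLp.equiv 2 (ι → ℝ)).symm b by simp]
  exact norm_add_le _ _

lemma vnorm_mul (c : ℝ) (a : ι → ℝ) : vnorm (fun i => c * a i) = |c| * vnorm a := by
  unfold vnorm
  rw [show ∑ i, (c * a i)^2 = c^2 * ∑ i, (a i)^2 by rw [Finset.mul_sum]; ring_nf]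
  rw [Real.sqrt_mul (sq_nonneg c), Real.sqrt_sq_eq_abs]

lemma abs_le_vnorm (v : ι → ℝ) (i : ι) : |v i| ≤ vnorm v := by
  rw [← Real.sqrt_sq_eq_abs]
  exact Real.sqrt_le_sqrt (Finset.single_le_sum (fun j _ => sq_nonneg (v j)) (mem_univ i))

lemma vnorm_continuous : Continuous (vnorm : (ι → ℝ) → ℝ) :=
  Real.continuous_sqrt.comp (continuous_finset_sum _ fun i _ => (continuous_apply i).pow 2)

end vnorm

section blocks
variable {n p : ℕ}

lemma bnorm_nonneg (x : Fin p × Fin n → ℝ) (i : Fin p) : 0 ≤ bnorm x i := vnorm_nonneg _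

lemma bl1_nonneg (x : Fin p × Fin n → ℝ) : 0 ≤ bl1 x :=
  Finset.sum_nonneg fun i _ => bnorm_nonneg x i

lemma bnorm_le_bl1 (x : Fin p × Fin n → ℝ) (i : Fin p) : bnorm x i ≤ bl1 x :=
  Finset.single_le_sum (fun j _ => bnorm_nonneg x j) (mem_univ i)

lemma bddAbove_bnorm (x : Fin p × Fin n → ℝ) : BddAbove (Set.range fun i => bnorm x i) :=
  (Set.finite_range _).bddAbove

lemma bnorm_le_blinf (x : Fin p × Fin n → ℝ) (i : Fin p) : bnorm x i ≤ blinf x :=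
  le_ciSup (bddAbove_bnorm x) i

lemma blinf_le [Nonempty (Fin p)] {x : Fin p × Fin n → ℝ} {c : ℝ}
    (h : ∀ i, bnorm x i ≤ c) : blinf x ≤ c := ciSup_le h

lemma blinf_nonneg (x : Fin p × Fin n → ℝ) : 0 ≤ blinf x :=
  Real.iSup_nonneg fun i => bnorm_nonneg x i

lemma blinf_le_bl1 [Nonempty (Fin p)] (x : Fin p × Fin n → ℝ) : blinf x ≤ bl1 x :=
  blinf_le fun i => bnorm_le_bl1 x i

lemma exists_blinf [Nonempty (Fin p)] (x : Fin p × Fin n → ℝ) :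
    ∃ i₀, blinf x = bnorm x i₀ ∧ ∀ i, bnorm x i ≤ bnorm x i₀ := by
  obtain ⟨i₀, h⟩ := Finite.exists_max (fun i => bnorm x i)
  exact ⟨i₀, le_antisymm (blinf_le h) (bnorm_le_blinf x i₀), h⟩

lemma blinf_eq [Nonempty (Fin p)] {x : Fin p × Fin n → ℝ} {i₀ : Fin p}
    (h : ∀ i, bnorm x i ≤ bnorm x i₀) : blinf x = bnorm x i₀ :=
  le_antisymm (blinf_le h) (bnorm_le_blinf x i₀)

lemma blinf_pos [Nonempty (Fin p)] {x : Fin p × Fin n → ℝ} (hx : x ≠ 0) : 0 < blinf x := by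
  have : ∃ b, x b ≠ 0 := by
    by_contra h
    push_neg at h
    exact hx (funext h)
  obtain ⟨⟨i, j⟩, hb⟩ := this
  have h1 : 0 < |x (i, j)| := abs_pos.mpr hb
  calc 0 < |x (i, j)| := h1
    _ ≤ bnorm x i := by simpa [bnorm] using abs_le_vnorm (fun j => x (i, j)) j
    _ ≤ blinf x := bnorm_le_blinf x i

lemma bnorm_mul (c : ℝ) (x : Fin p × Fin n → ℝ) (i : Fin p) :
    bnorm (fun b => c * x b) i = |c| * bnorm x i := vnorm_mul c _

lemma bl1_mul (c : ℝ) (x : Fin p × Fin n → ℝ) :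
    bl1 (fun b => c * x b) = |c| * bl1 x := by
  unfold bl1
  rw [Finset.mul_sum]
  exact Finset.sum_congr rfl fun i _ => bnorm_mul c x i

lemma blinf_mul [Nonempty (Fin p)] (c : ℝ) (x : Fin p × Fin n → ℝ) :
    blinf (fun b => c * x b) = |c| * blinf x := by
  obtain ⟨i₀, hx, hm⟩ := exists_blinf x
  have : ∀ i, bnorm (fun b => c * x b) i ≤ bnorm (fun b => c * x b) i₀ := by
    intro i
    rw [bnorm_mul, bnorm_mul]
    exact mul_le_mul_of_nonneg_left (hm i) (abs_nonneg c)
  rw [blinf_eq this, bnorm_mul, hx]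

lemma bnorm_add_le (a b : Fin p × Fin n → ℝ) (i : Fin p) :
    bnorm (fun q => a q + b q) i ≤ bnorm a i + bnorm b i := vnorm_add_le _ _

lemma bnorm_le_vnorm (x : Fin p × Fin n → ℝ) (i : Fin p) : bnorm x i ≤ vnorm x := by
  unfold bnorm vnorm
  apply Real.sqrt_le_sqrt
  rw [Fintype.sum_prod_type]
  exact Finset.single_le_sum
    (f := fun i => ∑ j, (x (i, j))^2)
    (fun k _ => Finset.sum_nonneg fun j _ => sq_nonneg _) (mem_univ i)

lemma blinf_sub_le [Nonempty (Fin p)] (x y : Fin p × Fin n → ℝ) :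
    blinf x ≤ blinf y + vnorm (fun b => x b - y b) := by
  apply blinf_le
  intro i
  have h1 : bnorm x i ≤ bnorm y i + bnorm (fun b => x b - y b) i := by
    have : bnorm x i = bnorm (fun q => y q + (x q - y q)) i := by
      congr 1; funext q; ring
    rw [this]
    exact bnorm_add_le _ _ i
  exact h1.trans (add_le_add (bnorm_le_blinf y i) (bnorm_le_vnorm _ i))

lemma continuous_bl1 : Continuous (bl1 : (Fin p × Fin n → ℝ) → ℝ) := by
  apply continuous_finset_sum
  intro i _
  exact vnorm_continuous.comp (continuous_pi fun j => continuous_apply (i, j))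

lemma continuous_blinf [Nonempty (Fin p)] : Continuous (blinf : (Fin p × Fin n → ℝ) → ℝ) := by
  rw [continuous_iff_continuousAt]
  intro y
  rw [ContinuousAt, tendsto_iff_dist_tendsto_zero]
  have hb : ∀ x, dist (blinf x) (blinf y) ≤ vnorm (fun b => x b - y b) := by
    intro x
    rw [Real.dist_eq, abs_sub_le_iff]
    constructor
    · linarith [blinf_sub_le x y]
    · have := blinf_sub_le y x
      have he : vnorm (fun b => y b - x b) = vnorm (fun b => x b - y b) := by
        rw [show (fun b => y b - x b) = (fun b => (-1 : ℝ) * (x b - y b)) by funext b; ring,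
          vnorm_mul]
        simp
      linarith [he ▸ this]
  have hg : Filter.Tendsto (fun x => vnorm (fun b => x b - y b)) (nhds y) (nhds 0) := by
    have hc : Continuous fun x : Fin p × Fin n → ℝ => vnorm (fun b => x b - y b) :=
      vnorm_continuous.comp (continuous_pi fun b => (continuous_apply b).sub continuous_const)
    have := hc.tendsto y
    simpa [vnorm_zero] using this
  exact squeeze_zero (fun x => dist_nonneg) hb hg

end blocks


section mv
variable {m' : Type*} [Fintype m'] {κ : Type*} [Fintype κ]

lemma mulVec_mulc (A : Matrix m' κ ℝ) (c : ℝ) (x : κ → ℝ) :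
    A.mulVec (fun b => c * x b) = fun i => c * A.mulVec x i := by
  funext i
  simp only [Matrix.mulVec, dotProduct, Finset.mul_sum]
  exact Finset.sum_congr rfl fun j _ => by ring

lemma mulVec_comb (A : Matrix m' κ ℝ) (w u v : κ → ℝ) (ε : ℝ) :
    A.mulVec (fun b => w b + ε * u b - ε * v b)
      = fun i => A.mulVec w i + ε * A.mulVec u i - ε * A.mulVec v i := by
  funext i
  simp only [Matrix.mulVec, dotProduct]
  calc ∑ j, A i j * (w j + ε * u j - ε * v j)
      = ∑ j, (A i j * w j + ε * (A i j * u j) - ε * (A i j * v j)) :=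
        Finset.sum_congr rfl fun j _ => by ring
    _ = ∑ j, A i j * w j + ε * ∑ j, A i j * u j - ε * ∑ j, A i j * v j := by
        rw [Finset.sum_sub_distrib, Finset.sum_add_distrib, ← Finset.mul_sum, ← Finset.mul_sum]

lemma continuous_vnorm_mulVec (A : Matrix m' κ ℝ) :
    Continuous fun z : κ → ℝ => vnorm (A.mulVec z) := by
  apply vnorm_continuous.comp
  apply continuous_pi
  intro i
  simp only [Matrix.mulVec, dotProduct]
  exact continuous_finset_sum _ fun j _ => continuous_const.mul (continuous_apply j)

end mv

lemma isCompact_of_closed_coordbdd {κ : Type*} [Fintype κ] {S : Set (κ → ℝ)} {R : ℝ}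
    (hcl : IsClosed S) (hb : ∀ z ∈ S, ∀ b, |z b| ≤ R) : IsCompact S := by
  apply Metric.isCompact_of_isClosed_isBounded hcl
  apply (Metric.isBounded_closedBall (x := (0 : κ → ℝ)) (r := max R 0)).subset
  intro z hz
  rw [Metric.mem_closedBall]
  rw [dist_pi_le_iff (le_max_right R 0)]
  intro b
  rw [Real.dist_eq]
  simp only [Pi.zero_apply, sub_zero]
  exact (hb z hz b).trans (le_max_left R 0)
/-- A single-block unit vector: nonzero, in the cone, with unit norms. -/
lemma exists_unit_cone {n p : ℕ} [Nonempty (Fin p)] [Nonempty (Fin n)] :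
    ∃ z : Fin p × Fin n → ℝ, z ≠ 0 ∧ blinf z = 1 ∧ bl1 z = 1 := by
  set i0 : Fin p := Classical.arbitrary (Fin p)
  set j0 : Fin n := Classical.arbitrary (Fin n)
  set e : Fin p × Fin n → ℝ := fun b => if b = (i0, j0) then 1 else 0 with he
  have hbn : ∀ i, bnorm e i = if i = i0 then 1 else 0 := by
    intro i
    by_cases h : i = i0
    · rw [if_pos h]
      show vnorm (fun j => e (i, j)) = 1
      unfold vnorm
      have : ∀ j : Fin n, (e (i, j))^2 = if j = j0 then 1 else 0 := by
        intro j
        simp only [he, Prod.mk.injEq, h]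
        by_cases hj : j = j0 <;> simp [hj]
      rw [Finset.sum_congr rfl fun j _ => this j, Finset.sum_ite_eq' Finset.univ j0 (fun _ => (1:ℝ))]
      simp
    · rw [if_neg h]
      show vnorm (fun j => e (i, j)) = 0
      have : (fun j => e (i, j)) = fun _ : Fin n => (0:ℝ) := by
        funext j
        simp only [he, Prod.mk.injEq]
        rw [if_neg (by tauto)]
      rw [this, vnorm_zero]
  refine ⟨e, ?_, ?_, ?_⟩
  · intro h
    have := congrFun h (i0, j0)
    simp [he] at this
  · have : ∀ i, bnorm e i ≤ bnorm e i0 := by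
      intro i
      rw [hbn i, hbn i0, if_pos rfl]
      split <;> norm_num
    rw [blinf_eq this, hbn i0, if_pos rfl]
  · unfold bl1
    rw [Finset.sum_congr rfl fun i _ => hbn i,
      Finset.sum_ite_eq' Finset.univ i0 (fun _ => (1:ℝ))]
    simp

/-- Key perturbation lemma: if every feasible vector has `blinf ≤ η`, then any `w`
on the boundary `blinf w = η`, `bl1 w ≤ s*η` must have `‖Aw‖ ≥ 1`. -/
lemma key_lemma {m n p : ℕ} [Nonempty (Fin p)] (A : Matrix (Fin m) (Fin p × Fin n) ℝ)
    {s η : ℝ} (hs1 : 1 < s) (hη : 0 < η)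
    (hub : ∀ z : Fin p × Fin n → ℝ, vnorm (A.mulVec z) ≤ 1 → bl1 z ≤ s * η → blinf z ≤ η)
    {w : Fin p × Fin n → ℝ} (hw1 : blinf w = η) (hw2 : bl1 w ≤ s * η) :
    1 ≤ vnorm (A.mulVec w) := by
  by_contra hcon
  push_neg at hcon
  set a := vnorm (A.mulVec w) with ha
  have ha0 : 0 ≤ a := vnorm_nonneg _
  by_cases hlt : bl1 w < s * η
  · -- slack in the ℓ1 constraint: scale up
    have hbl1pos : 0 < bl1 w := by
      have := blinf_le_bl1 w
      rw [hw1] at this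
      linarith
    set c := min (s * η / bl1 w) (2 / (1 + a)) with hc
    have hc1 : 1 < c := by
      apply lt_min
      · exact (one_lt_div hbl1pos).mpr hlt
      · rw [lt_div_iff₀ (by linarith : (0:ℝ) < 1 + a)]
        linarith
    have h1 : vnorm (A.mulVec (fun b => c * w b)) ≤ 1 := by
      rw [mulVec_mulc, vnorm_mul, abs_of_pos (by linarith : (0:ℝ) < c), ← ha]
      have hc2 : c ≤ 2 / (1 + a) := min_le_right _ _
      have : c * a ≤ (2 / (1 + a)) * a :=
        mul_le_mul_of_nonneg_right hc2 ha0
      have h2 : (2 / (1 + a)) * a ≤ 1 := by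
        rw [div_mul_eq_mul_div, div_le_one (by linarith : (0:ℝ) < 1 + a)]
        linarith
      linarith
    have h2 : bl1 (fun b => c * w b) ≤ s * η := by
      rw [bl1_mul, abs_of_pos (by linarith : (0:ℝ) < c)]
      calc c * bl1 w ≤ (s * η / bl1 w) * bl1 w :=
            mul_le_mul_of_nonneg_right (min_le_left _ _) hbl1pos.le
        _ = s * η := div_mul_cancel₀ _ hbl1pos.ne'
    have h3 := hub _ h1 h2
    rw [blinf_mul, abs_of_pos (by linarith : (0:ℝ) < c), hw1] at h3
    nlinarith
  · -- tight ℓ1 constraint: redistribute mass between blocks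
    have heq : bl1 w = s * η := le_antisymm hw2 (not_lt.mp hlt)
    obtain ⟨i₀, hbi₀, hmax⟩ := exists_blinf w
    rw [hw1] at hbi₀
    have hsum : ∑ i ∈ Finset.univ.erase i₀, bnorm w i = s * η - η := by
      have := Finset.add_sum_erase Finset.univ (bnorm w) (Finset.mem_univ i₀)
      have hb : bl1 w = bnorm w i₀ + ∑ i ∈ Finset.univ.erase i₀, bnorm w i := this.symm
      rw [heq, ← hbi₀] at hb
      linarith
    have hpos : (0:ℝ) < s * η - η := by nlinarith
    have : ∃ i₁ ∈ Finset.univ.erase i₀, 0 < bnorm w i₁ := by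
      by_contra hc
      push_neg at hc
      have : ∑ i ∈ Finset.univ.erase i₀, bnorm w i ≤ 0 :=
        Finset.sum_nonpos fun i hi => hc i hi
      linarith
    obtain ⟨i₁, hi₁mem, hb₁pos⟩ := this
    have hi₁ne : i₁ ≠ i₀ := (Finset.mem_erase.mp hi₁mem).1
    set b₁ := bnorm w i₁ with hb₁
    have hb₁le : b₁ ≤ η := hbi₀ ▸ hmax i₁
    set u := fun b : Fin p × Fin n => if b.1 = i₀ then w b / η else 0 with hu
    set v := fun b : Fin p × Fin n => if b.1 = i₁ then w b / b₁ else 0 with hv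
    set M := vnorm (A.mulVec u) + vnorm (A.mulVec v) with hM
    have hM0 : 0 ≤ M := add_nonneg (vnorm_nonneg _) (vnorm_nonneg _)
    set ε := min (b₁ / 2) ((1 - a) / (2 * (M + 1))) with hε
    have h2M : (0:ℝ) < 2 * (M + 1) := by linarith
    have hε0 : 0 < ε := lt_min (by linarith) (div_pos (by linarith) h2M)
    have hεb₁ : ε ≤ b₁ / 2 := min_le_left _ _
    set w' := fun b : Fin p × Fin n => w b + ε * u b - ε * v b with hw'
    -- block norms of w'
    have hrow₀ : (fun j => w' (i₀, j)) = fun j => (1 + ε / η) * w (i₀, j) := by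
      funext j
      simp only [hw', hu, hv]
      simp only [hi₁ne.symm, if_pos rfl, if_neg (Ne.symm hi₁ne), ↓reduceIte]
      field_simp
      ring
    have hrow₁ : (fun j => w' (i₁, j)) = fun j => (1 - ε / b₁) * w (i₁, j) := by
      funext j
      simp only [hw', hu, hv]
      simp only [if_pos rfl, if_neg hi₁ne, ↓reduceIte]
      field_simp
      ring
    have hrow : ∀ i, i ≠ i₀ → i ≠ i₁ → (fun j => w' (i, j)) = fun j => w (i, j) := by
      intro i h0 h1
      funext j
      simp only [hw', hu, hv, if_neg h0, if_neg h1]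
      ring
    have hbn₀ : bnorm w' i₀ = η + ε := by
      show vnorm (fun j => w' (i₀, j)) = η + ε
      rw [hrow₀]
      rw [show (fun j => (1 + ε / η) * w (i₀, j)) = fun j => (1 + ε / η) * (fun j' => w (i₀, j')) j from rfl]
      rw [vnorm_mul, abs_of_pos (by have hd : 0 < ε / η := div_pos hε0 hη; linarith)]
      show (1 + ε / η) * bnorm w i₀ = η + ε
      rw [← hbi₀, add_mul, one_mul, div_mul_cancel₀ _ hη.ne']
    have hbn₁ : bnorm w' i₁ = b₁ - ε := by
      show vnorm (fun j => w' (i₁, j)) = b₁ - ε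
      rw [hrow₁]
      rw [show (fun j => (1 - ε / b₁) * w (i₁, j)) = fun j => (1 - ε / b₁) * (fun j' => w (i₁, j')) j from rfl]
      rw [vnorm_mul, abs_of_pos (by rw [sub_pos, div_lt_one hb₁pos]; linarith)]
      show (1 - ε / b₁) * bnorm w i₁ = b₁ - ε
      rw [← hb₁, sub_mul, one_mul, div_mul_cancel₀ _ hb₁pos.ne']
    have hbn : ∀ i, i ≠ i₀ → i ≠ i₁ → bnorm w' i = bnorm w i := by
      intro i h0 h1
      show vnorm (fun j => w' (i, j)) = bnorm w i
      rw [hrow i h0 h1]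
      rfl
    -- bl1 of w'
    have hbl1' : bl1 w' = s * η := by
      have hkey : ∀ i, bnorm w' i
          = bnorm w i + (if i = i₀ then ε else 0) - (if i = i₁ then ε else 0) := by
        intro i
        by_cases h0 : i = i₀
        · subst h0
          rw [hbn₀, if_pos rfl, if_neg hi₁ne.symm, hbi₀]
          ring
        · by_cases h1 : i = i₁
          · subst h1
            rw [hbn₁, if_neg h0, if_pos rfl, ← hb₁]
            ring
          · rw [hbn i h0 h1, if_neg h0, if_neg h1]
            ring
      unfold bl1
      rw [Finset.sum_congr rfl fun i _ => hkey i]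
      rw [Finset.sum_sub_distrib, Finset.sum_add_distrib,
        Finset.sum_ite_eq' Finset.univ i₀ (fun _ => ε),
        Finset.sum_ite_eq' Finset.univ i₁ (fun _ => ε)]
      simp only [Finset.mem_univ, if_pos]
      rw [show (∑ i, bnorm w i) = bl1 w from rfl, heq]
      ring
    -- blinf of w'
    have hblinf' : blinf w' = η + ε := by
      rw [← hbn₀]
      apply blinf_eq
      intro i
      by_cases h0 : i = i₀
      · subst h0; exact le_refl _
      · by_cases h1 : i = i₁
        · subst h1
          rw [hbn₁, hbn₀]
          linarith
        · rw [hbn i h0 h1, hbn₀]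
          have := hbi₀ ▸ hmax i
          linarith
    -- norm bound for A w'
    have hAw' : vnorm (A.mulVec w') ≤ a + ε * M := by
      rw [hw', mulVec_comb]
      set a1 := A.mulVec w
      set a2 := A.mulVec u
      set a3 := A.mulVec v
      have step1 : vnorm (fun i => a1 i + ε * a2 i - ε * a3 i)
          ≤ vnorm (fun i => a1 i + ε * a2 i) + vnorm (fun i => -ε * a3 i) := by
        have : (fun i => a1 i + ε * a2 i - ε * a3 i)
            = fun i => (fun i' => a1 i' + ε * a2 i') i + (fun i' => -ε * a3 i') i := by
          funext i; ring
        rw [this]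
        exact vnorm_add_le _ _
      have step2 : vnorm (fun i => a1 i + ε * a2 i)
          ≤ vnorm a1 + vnorm (fun i => ε * a2 i) := vnorm_add_le _ _
      rw [vnorm_mul] at step2
      have step3 : vnorm (fun i => -ε * a3 i) = |(-ε)| * vnorm a3 := vnorm_mul _ _
      rw [abs_of_pos hε0] at step2
      rw [abs_neg, abs_of_pos hε0] at step3
      have : vnorm (fun i => a1 i + ε * a2 i - ε * a3 i)
          ≤ vnorm a1 + ε * vnorm a2 + ε * vnorm a3 := by linarith
      calc vnorm (fun i => a1 i + ε * a2 i - ε * a3 i)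
          ≤ vnorm a1 + ε * vnorm a2 + ε * vnorm a3 := this
        _ = a + ε * M := by rw [hM]; ring
    have hfeas1 : vnorm (A.mulVec w') ≤ 1 := by
      have hε2 : ε ≤ (1 - a) / (2 * (M + 1)) := min_le_right _ _
      have : ε * M ≤ (1 - a) / (2 * (M + 1)) * M :=
        mul_le_mul_of_nonneg_right hε2 hM0
      have h5 : (1 - a) / (2 * (M + 1)) * M ≤ (1 - a) / 2 := by
        rw [div_mul_eq_mul_div, div_le_div_iff₀ h2M (by norm_num)]
        nlinarith
      have h6 : ε * M ≤ (1 - a) / 2 := le_trans this h5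
      calc vnorm (A.mulVec w') ≤ a + ε * M := hAw'
        _ ≤ a + (1 - a) / 2 := by linarith
        _ ≤ 1 := by linarith
    have := hub w' hfeas1 (le_of_eq hbl1')
    rw [hblinf'] at this
    linarith

lemma fixed_eq_inv_omega {m n p : ℕ} [Nonempty (Fin p)] [Nonempty (Fin n)]
    (A : Matrix (Fin m) (Fin p × Fin n) ℝ) {s η : ℝ} (hs1 : 1 < s) (hη : 0 < η)
    (hfix : sSup {r | ∃ z : Fin p × Fin n → ℝ,
      vnorm (A.mulVec z) ≤ 1 ∧ bl1 z ≤ s * η ∧ r = blinf z} = η) :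
    omega2 A s = 1 / η := by
  set S : Set ℝ := {r | ∃ z : Fin p × Fin n → ℝ,
    vnorm (A.mulVec z) ≤ 1 ∧ bl1 z ≤ s * η ∧ r = blinf z} with hS
  have hbddS : BddAbove S := by
    refine ⟨s * η, ?_⟩
    rintro r ⟨z, _, hz2, rfl⟩
    exact (blinf_le_bl1 z).trans hz2
  -- every feasible z has blinf z ≤ η
  have hub : ∀ z : Fin p × Fin n → ℝ, vnorm (A.mulVec z) ≤ 1 → bl1 z ≤ s * η →
      blinf z ≤ η := by
    intro z h1 h2
    have : blinf z ∈ S := ⟨z, h1, h2, rfl⟩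
    calc blinf z ≤ sSup S := le_csSup hbddS this
      _ = η := hfix
  -- key lemma applies
  have hkey : ∀ w : Fin p × Fin n → ℝ, blinf w = η → bl1 w ≤ s * η →
      1 ≤ vnorm (A.mulVec w) := fun w hw1 hw2 => key_lemma A hs1 hη hub hw1 hw2
  -- lower bound: omega2 ≥ 1/η
  have hlow : 1 / η ≤ omega2 A s := by
    apply le_csInf
    · -- nonempty: single block vector
      obtain ⟨e, he0, he1, he2⟩ := exists_unit_cone (n := n) (p := p)
      exact ⟨vnorm (A.mulVec e) / blinf e, e, he0, by rw [he1, he2]; linarith, rfl⟩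
    · rintro r ⟨z, hz0, hzc, rfl⟩
      have hbp : 0 < blinf z := blinf_pos hz0
      set t := η / blinf z with ht
      have htpos : 0 < t := div_pos hη hbp
      have hw1 : blinf (fun b => t * z b) = η := by
        rw [blinf_mul, abs_of_pos htpos, ht, div_mul_cancel₀ _ hbp.ne']
      have hw2 : bl1 (fun b => t * z b) ≤ s * η := by
        rw [bl1_mul, abs_of_pos htpos]
        calc t * bl1 z ≤ t * (s * blinf z) := mul_le_mul_of_nonneg_left hzc htpos.le
          _ = s * (t * blinf z) := by ring
          _ = s * η := by rw [ht, div_mul_cancel₀ _ hbp.ne']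
      have h1 := hkey _ hw1 hw2
      rw [mulVec_mulc, vnorm_mul, abs_of_pos htpos] at h1
      rw [ht, div_mul_eq_mul_div, one_le_div hbp] at h1
      rw [div_le_div_iff₀ hη hbp]
      nlinarith [vnorm_nonneg (A.mulVec z)]
  -- upper bound: omega2 ≤ 1/η via a maximizer
  have hupp : omega2 A s ≤ 1 / η := by
    -- compactness: get a maximizer of blinf over feasible set
    set F : Set (Fin p × Fin n → ℝ) :=
      {z | vnorm (A.mulVec z) ≤ 1 ∧ bl1 z ≤ s * η} with hF
    have hclosed : IsClosed F := by
      apply IsClosed.inter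
      · exact isClosed_Iic.preimage (continuous_vnorm_mulVec A)
      · exact isClosed_Iic.preimage continuous_bl1
    have hcomp : IsCompact F := by
      apply isCompact_of_closed_coordbdd hclosed (R := s * η)
      rintro z ⟨_, hz2⟩ b
      calc |z b| = |z (b.1, b.2)| := by rw [Prod.mk.eta]
        _ ≤ bnorm z b.1 := by simpa [bnorm] using abs_le_vnorm (fun j => z (b.1, j)) b.2
        _ ≤ bl1 z := bnorm_le_bl1 z b.1
        _ ≤ s * η := hz2
    have hFne : F.Nonempty := by
      refine ⟨0, ?_, ?_⟩
      · simp [Matrix.mulVec_zero]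
        rw [show (0 : Fin m → ℝ) = fun _ : Fin m => (0:ℝ) from rfl, vnorm_zero]
        norm_num
      · have : bl1 (0 : Fin p × Fin n → ℝ) = 0 := by
          unfold bl1 bnorm
          rw [Finset.sum_eq_zero]
          intro i _
          rw [show (fun j => (0 : Fin p × Fin n → ℝ) (i, j)) = fun _ : Fin n => (0:ℝ) from rfl,
            vnorm_zero]
        rw [this]
        positivity
    obtain ⟨z₀, hz₀F, hz₀max⟩ := hcomp.exists_isMaxOn hFne continuous_blinf.continuousOn
    have hsup : sSup S = blinf z₀ := by
      apply le_antisymm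
      · refine csSup_le ⟨blinf z₀, ⟨z₀, hz₀F.1, hz₀F.2, rfl⟩⟩ ?_
        rintro r ⟨z, h1, h2, rfl⟩
        exact hz₀max (⟨h1, h2⟩ : z ∈ F)
      · exact le_csSup hbddS ⟨z₀, hz₀F.1, hz₀F.2, rfl⟩
    have hbz₀ : blinf z₀ = η := by rw [← hsup, hfix]
    have hz₀ne : z₀ ≠ 0 := by
      intro h
      rw [h] at hbz₀
      have : blinf (0 : Fin p × Fin n → ℝ) = 0 := by
        unfold blinf bnorm
        have : ∀ i : Fin p, vnorm (fun j => (0 : Fin p × Fin n → ℝ) (i, j)) = 0 :=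
          fun i => vnorm_zero
        simp only [this]
        exact ciSup_const
      rw [this] at hbz₀
      linarith
    have hmem : vnorm (A.mulVec z₀) / blinf z₀ ∈ {r | ∃ z : Fin p × Fin n → ℝ,
        z ≠ 0 ∧ bl1 z ≤ s * blinf z ∧ r = vnorm (A.mulVec z) / blinf z} :=
      ⟨z₀, hz₀ne, by rw [hbz₀]; exact hz₀F.2, rfl⟩
    have hbdd : BddBelow {r | ∃ z : Fin p × Fin n → ℝ,
        z ≠ 0 ∧ bl1 z ≤ s * blinf z ∧ r = vnorm (A.mulVec z) / blinf z} := by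
      refine ⟨0, ?_⟩
      rintro r ⟨z, _, _, rfl⟩
      exact div_nonneg (vnorm_nonneg _) (blinf_nonneg _)
    calc omega2 A s ≤ vnorm (A.mulVec z₀) / blinf z₀ := csInf_le hbdd hmem
      _ ≤ 1 / η := by
          rw [hbz₀]
          gcongr
          exact hz₀F.1
  exact le_antisymm hupp hlow

lemma omega2_pos_min {m n p : ℕ} [Nonempty (Fin p)] [Nonempty (Fin n)]
    (A : Matrix (Fin m) (Fin p × Fin n) ℝ) {s sstar : ℝ}
    (hsstar : sstar = sInf {r | ∃ z : Fin p × Fin n → ℝ,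
      z ≠ 0 ∧ A.mulVec z = 0 ∧ r = bl1 z / blinf z})
    (hs1 : 1 < s) (hs2 : s < sstar) :
    0 < omega2 A s ∧ ∃ zs : Fin p × Fin n → ℝ,
      blinf zs = 1 ∧ bl1 zs ≤ s ∧ omega2 A s = vnorm (A.mulVec zs) := by
  -- compact set K
  set K : Set (Fin p × Fin n → ℝ) := {z | blinf z = 1 ∧ bl1 z ≤ s} with hK
  have hclosed : IsClosed K := by
    apply IsClosed.inter
    · exact isClosed_singleton.preimage continuous_blinf
    · exact isClosed_Iic.preimage continuous_bl1
  have hcomp : IsCompact K := by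
    apply isCompact_of_closed_coordbdd hclosed (R := s)
    rintro z ⟨_, hz2⟩ b
    calc |z b| = |z (b.1, b.2)| := by rw [Prod.mk.eta]
      _ ≤ bnorm z b.1 := by simpa [bnorm] using abs_le_vnorm (fun j => z (b.1, j)) b.2
      _ ≤ bl1 z := bnorm_le_bl1 z b.1
      _ ≤ s := hz2
  have hKne : K.Nonempty := by
    obtain ⟨e, he0, he1, he2⟩ := exists_unit_cone (n := n) (p := p)
    exact ⟨e, he1, by rw [he2]; linarith⟩
  obtain ⟨zs, hzsK, hzsmin⟩ := hcomp.exists_isMinOn hKne (continuous_vnorm_mulVec A).continuousOn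
  have hzs1 : blinf zs = 1 := hzsK.1
  have hzs2 : bl1 zs ≤ s := hzsK.2
  have hzsne : zs ≠ 0 := by
    intro h
    rw [h] at hzs1
    have : blinf (0 : Fin p × Fin n → ℝ) = 0 := by
      unfold blinf bnorm
      have hz : ∀ i : Fin p, vnorm (fun j => (0 : Fin p × Fin n → ℝ) (i, j)) = 0 :=
        fun i => vnorm_zero
      simp only [hz]
      exact ciSup_const
    rw [this] at hzs1
    norm_num at hzs1
  have hbdd : BddBelow {r | ∃ z : Fin p × Fin n → ℝ,
      z ≠ 0 ∧ bl1 z ≤ s * blinf z ∧ r = vnorm (A.mulVec z) / blinf z} := by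
    refine ⟨0, ?_⟩
    rintro r ⟨z, _, _, rfl⟩
    exact div_nonneg (vnorm_nonneg _) (blinf_nonneg _)
  have homega : omega2 A s = vnorm (A.mulVec zs) := by
    apply le_antisymm
    · have : vnorm (A.mulVec zs) / blinf zs ∈ {r | ∃ z : Fin p × Fin n → ℝ,
          z ≠ 0 ∧ bl1 z ≤ s * blinf z ∧ r = vnorm (A.mulVec z) / blinf z} :=
        ⟨zs, hzsne, by rw [hzs1]; simpa using hzs2, rfl⟩
      have h1 := csInf_le hbdd this
      rwa [hzs1, div_one] at h1
    · apply le_csInf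
      · obtain ⟨e, he0, he1, he2⟩ := exists_unit_cone (n := n) (p := p)
        exact ⟨vnorm (A.mulVec e) / blinf e, e, he0, by rw [he1, he2]; linarith, rfl⟩
      · rintro r ⟨z, hz0, hzc, rfl⟩
        have hbp : 0 < blinf z := blinf_pos hz0
        set t := 1 / blinf z with ht
        have htpos : 0 < t := by positivity
        have hwK : (fun b => t * z b) ∈ K := by
          constructor
          · rw [blinf_mul, abs_of_pos htpos, ht, one_div, inv_mul_cancel₀ hbp.ne']
          · rw [bl1_mul, abs_of_pos htpos]
            calc t * bl1 z ≤ t * (s * blinf z) := mul_le_mul_of_nonneg_left hzc htpos.le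
              _ = s * (t * blinf z) := by ring
              _ = s := by rw [ht, one_div, inv_mul_cancel₀ hbp.ne', mul_one]
        have h7 : vnorm (A.mulVec zs) ≤ vnorm (A.mulVec (fun b => t * z b)) := hzsmin hwK
        rw [mulVec_mulc, vnorm_mul, abs_of_pos htpos] at h7
        calc vnorm (A.mulVec zs) ≤ t * vnorm (A.mulVec z) := h7
          _ = vnorm (A.mulVec z) / blinf z := by rw [ht]; ring
  refine ⟨?_, zs, hzs1, hzs2, homega⟩
  rw [homega]
  rcases lt_or_eq_of_le (vnorm_nonneg (A.mulVec zs)) with h | h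
  · exact h
  · exfalso
    have hker : A.mulVec zs = 0 := vnorm_eq_zero h.symm
    have hmem : bl1 zs / blinf zs ∈ {r | ∃ z : Fin p × Fin n → ℝ,
        z ≠ 0 ∧ A.mulVec z = 0 ∧ r = bl1 z / blinf z} := ⟨zs, hzsne, hker, rfl⟩
    have hbdd2 : BddBelow {r | ∃ z : Fin p × Fin n → ℝ,
        z ≠ 0 ∧ A.mulVec z = 0 ∧ r = bl1 z / blinf z} := by
      refine ⟨0, ?_⟩
      rintro r ⟨z, _, _, rfl⟩
      exact div_nonneg (bl1_nonneg _) (blinf_nonneg _)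
    have := csInf_le hbdd2 hmem
    rw [← hsstar] at this
    rw [hzs1, div_one] at this
    linarith

lemma exists_fixed {m n p : ℕ} [Nonempty (Fin p)] [Nonempty (Fin n)]
    (A : Matrix (Fin m) (Fin p × Fin n) ℝ) {s sstar : ℝ}
    (hsstar : sstar = sInf {r | ∃ z : Fin p × Fin n → ℝ,
      z ≠ 0 ∧ A.mulVec z = 0 ∧ r = bl1 z / blinf z})
    (hs1 : 1 < s) (hs2 : s < sstar) :
    0 < 1 / omega2 A s ∧ sSup {r | ∃ z : Fin p × Fin n → ℝ,
      vnorm (A.mulVec z) ≤ 1 ∧ bl1 z ≤ s * (1 / omega2 A s) ∧ r = blinf z} = 1 / omega2 A s := by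
  obtain ⟨hω, zs, hzs1, hzs2, hωmin⟩ := omega2_pos_min A hsstar hs1 hs2
  set ω := omega2 A s with hωdef
  set ηs := 1 / ω with hηs
  have hηspos : 0 < ηs := by positivity
  refine ⟨hηspos, ?_⟩
  -- upper bound
  have hub : ∀ r ∈ {r | ∃ z : Fin p × Fin n → ℝ,
      vnorm (A.mulVec z) ≤ 1 ∧ bl1 z ≤ s * ηs ∧ r = blinf z}, r ≤ ηs := by
    rintro r ⟨z, h1, h2, rfl⟩
    by_cases hz : z = 0
    · rw [hz]
      have : blinf (0 : Fin p × Fin n → ℝ) = 0 := by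
        unfold blinf bnorm
        have hzz : ∀ i : Fin p, vnorm (fun j => (0 : Fin p × Fin n → ℝ) (i, j)) = 0 :=
          fun i => vnorm_zero
        simp only [hzz]
        exact ciSup_const
      rw [this]
      linarith
    · have hbp : 0 < blinf z := blinf_pos hz
      by_cases hcone : bl1 z ≤ s * blinf z
      · have hmem : vnorm (A.mulVec z) / blinf z ∈ {r | ∃ z : Fin p × Fin n → ℝ,
            z ≠ 0 ∧ bl1 z ≤ s * blinf z ∧ r = vnorm (A.mulVec z) / blinf z} :=
          ⟨z, hz, hcone, rfl⟩
        have hbdd : BddBelow {r | ∃ z : Fin p × Fin n → ℝ,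
            z ≠ 0 ∧ bl1 z ≤ s * blinf z ∧ r = vnorm (A.mulVec z) / blinf z} := by
          refine ⟨0, ?_⟩
          rintro r ⟨z', _, _, rfl⟩
          exact div_nonneg (vnorm_nonneg _) (blinf_nonneg _)
        have hle : ω ≤ vnorm (A.mulVec z) / blinf z := csInf_le hbdd hmem
        have h3 : ω * blinf z ≤ vnorm (A.mulVec z) := (le_div_iff₀ hbp).mp hle
        have : ω * blinf z ≤ 1 := h3.trans h1
        rw [hηs, le_div_iff₀ hω]
        linarith [mul_comm ω (blinf z)]
      · push_neg at hcone
        have : s * blinf z < s * ηs := lt_of_lt_of_le hcone h2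
        have hs0 : (0:ℝ) < s := by linarith
        exact le_of_lt ((mul_lt_mul_iff_right₀ hs0).mp this)
  -- membership
  have hmem : ηs ∈ {r | ∃ z : Fin p × Fin n → ℝ,
      vnorm (A.mulVec z) ≤ 1 ∧ bl1 z ≤ s * ηs ∧ r = blinf z} := by
    refine ⟨fun b => (1 / ω) * zs b, ?_, ?_, ?_⟩
    · rw [mulVec_mulc, vnorm_mul, abs_of_pos (by positivity : (0:ℝ) < 1/ω), ← hωmin]
      rw [one_div, inv_mul_cancel₀ hω.ne']
    · rw [bl1_mul, abs_of_pos (by positivity : (0:ℝ) < 1/ω)]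
      calc (1/ω) * bl1 zs ≤ (1/ω) * s := by
            apply mul_le_mul_of_nonneg_left hzs2 (by positivity)
        _ = s * ηs := by rw [hηs]; ring
    · rw [blinf_mul, abs_of_pos (by positivity : (0:ℝ) < 1/ω), hzs1, mul_one, hηs]
  exact le_antisymm (csSup_le ⟨ηs, hmem⟩ hub) (le_csSup ⟨ηs, hub⟩ hmem)

/-- Proposition 3, item 4: for `1 < s < s^*`, the function
`f_s(η) = sup{‖z‖_{b∞} : ‖Az‖₂ ≤ 1, ‖z‖_{b1} ≤ sη}` has a unique positive fixed point,
which equals `1/ω₂(A,s)`. -/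
theorem stmt14 {m n p : ℕ} (A : Matrix (Fin m) (Fin p × Fin n) ℝ) (s sstar : ℝ) (f : ℝ → ℝ)
    (hm : m < (p - 1) * n)
    (hsstar : sstar = sInf {r | ∃ z : Fin p × Fin n → ℝ,
      z ≠ 0 ∧ A.mulVec z = 0 ∧ r = bl1 z / blinf z})
    (hs1 : 1 < s) (hs2 : s < sstar)
    (hf : ∀ η, f η = sSup {r | ∃ z : Fin p × Fin n → ℝ,
      vnorm (A.mulVec z) ≤ 1 ∧ bl1 z ≤ s * η ∧ r = blinf z}) :
    (∃! η : ℝ, 0 < η ∧ f η = η) ∧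
    (∀ η : ℝ, 0 < η → f η = η → η = 1 / omega2 A s) := by
  have h0 : 0 < (p - 1) * n := lt_of_le_of_lt (Nat.zero_le m) hm
  have hn : 0 < n := by
    rcases Nat.eq_zero_or_pos n with h | h
    · rw [h, Nat.mul_zero] at h0; exact absurd h0 (lt_irrefl 0)
    · exact h
  have hp : 0 < p := by
    rcases Nat.eq_zero_or_pos p with h | h
    · rw [h] at h0; simp at h0
    · exact h
  haveI : Nonempty (Fin p) := ⟨⟨0, hp⟩⟩
  haveI : Nonempty (Fin n) := ⟨⟨0, hn⟩⟩
  obtain ⟨hηpos, hηfix⟩ := exists_fixed A hsstar hs1 hs2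
  have huniq : ∀ η : ℝ, 0 < η → f η = η → η = 1 / omega2 A s := by
    intro η hη hfη
    rw [hf η] at hfη
    have h := fixed_eq_inv_omega A hs1 hη hfη
    rw [h, one_div_one_div]
  constructor
  · refine ⟨1 / omega2 A s, ⟨hηpos, ?_⟩, ?_⟩
    · rw [hf]
      exact hηfix
    · rintro y ⟨hy1, hy2⟩
      exact huniq y hy1 hy2
  · exact huniq
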